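/- Let S ⊆ S^{d-1} be a subset of the unit sphere in R^d such that every open hemisphere of S^{d-1} contains a point in the interior of S (interior taken in S^{d-1}). Then the origin lies in the interior of the convex hull of the interior of S. -/

import Mathlib

open RealInnerProductSpace

/-- The interior of `S` relative to the unit sphere `S^{d-1}`. -/
def sphereInterior {d : ℕ} (S : Set (EuclideanSpace ℝ (Fin d))) :
    Set (EuclideanSpace ℝ (Fin d)) :=
  {u ∈ S | ∃ ε > 0, ∀ v ∈ Metric.sphere (0 : EuclideanSpace ℝ (Fin d)) 1,
    dist v u < ε → v ∈ S}

/-- If every open hemisphere meets `T`, then `0` is in the interior of the hull of `T`. -/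
theorem aux_origin_mem {d : ℕ} (hd : 2 ≤ d) (T : Set (EuclideanSpace ℝ (Fin d)))
    (h : ∀ w : EuclideanSpace ℝ (Fin d), ‖w‖ = 1 → ∃ u ∈ T, 0 < ⟪u, w⟫) :
    (0 : EuclideanSpace ℝ (Fin d)) ∈ interior (convexHull ℝ T) := by
  classical
  let E := EuclideanSpace ℝ (Fin d)
  show (0:E) ∈ interior (convexHull ℝ T)
  have hcov : Metric.sphere (0 : E) 1 ⊆ ⋃ u ∈ T, {w : E | 0 < ⟪u, w⟫} := by
    intro w hw
    obtain ⟨u, hu, hpos⟩ := h w (by simpa using hw)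
    exact Set.mem_biUnion hu hpos
  have hopen : ∀ u ∈ T, IsOpen {w : E | 0 < ⟪u, w⟫} :=
    fun u _ => isOpen_lt continuous_const (continuous_const.inner continuous_id)
  obtain ⟨b, hbT, hbfin, hbcov⟩ :=
    (isCompact_sphere (0 : E) 1).elim_finite_subcover_image hopen hcov
  set t : Finset E := hbfin.toFinset with ht
  have htT : (t : Set E) ⊆ T := by simpa [ht, Set.Finite.coe_toFinset] using hbT
  have hcov' : Metric.sphere (0 : E) 1 ⊆ ⋃ u ∈ t, {w : E | 0 < ⟪u, w⟫} := by
    simpa [ht, Set.Finite.mem_toFinset] using hbcov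
  -- the sphere is nonempty
  have hw1 : (EuclideanSpace.single (⟨0, by omega⟩ : Fin d) (1 : ℝ) : E) ∈
      Metric.sphere (0 : E) 1 := by
    simp [EuclideanSpace.norm_single]
  have hne : t.Nonempty := by
    obtain ⟨u, hu, -⟩ := Set.mem_iUnion₂.1 (hcov' hw1)
    exact ⟨u, hu⟩
  -- the min over the sphere of the max over t
  set g : E → ℝ := fun w => t.sup' hne fun u => ⟪u, w⟫ with hg
  have hgc : Continuous g :=
    Continuous.finset_sup'_apply hne fun u _ => continuous_const.inner continuous_id
  obtain ⟨w0, hw0, hmin⟩ := (isCompact_sphere (0 : E) 1).exists_isMinOn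
    ⟨_, hw1⟩ hgc.continuousOn
  set δ : ℝ := g w0 with hδ
  have hδpos : 0 < δ := by
    obtain ⟨u, hu, hupos⟩ := Set.mem_iUnion₂.1 (hcov' hw0)
    exact lt_of_lt_of_le hupos (Finset.le_sup' (fun u : E => ⟪u, w0⟫) hu)
  -- the hull of t is a closed convex set
  set P : Set E := convexHull ℝ (t : Set E) with hP
  have hPc : IsClosed P := (t.finite_toSet.isCompact_convexHull (𝕜 := ℝ)).isClosed
  have hball : Metric.ball (0 : E) δ ⊆ P := by
    intro y hy
    by_contra hyP
    obtain ⟨f, c, hfP, hfy⟩ := geometric_hahn_banach_closed_point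
      (convex_convexHull ℝ _) hPc hyP
    set v : E := (InnerProductSpace.toDual ℝ E).symm f with hv
    have hfv : ∀ x : E, f x = ⟪v, x⟫ := fun x =>
      (InnerProductSpace.toDual_symm_apply).symm
    have hvne : v ≠ 0 := by
      intro h0
      obtain ⟨u0, hu0⟩ := hne
      have h1 : f u0 < f y := lt_trans (hfP u0 (subset_convexHull ℝ _ hu0)) hfy
      rw [hfv, hfv, h0] at h1
      simp at h1
    have hvpos : 0 < ‖v‖ := norm_pos_iff.2 hvne
    set w : E := ‖v‖⁻¹ • v with hw
    have hwS : w ∈ Metric.sphere (0 : E) 1 := by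
      simp [hw, norm_smul, abs_of_pos (inv_pos.2 hvpos), inv_mul_cancel₀ hvpos.ne']
    have hgw : δ ≤ g w := hmin hwS
    obtain ⟨u, hu, hgu⟩ := Finset.exists_mem_eq_sup' hne fun u : E => ⟪u, w⟫
    have huw : δ ≤ ⟪u, w⟫ := by rw [← hgu]; exact hgw
    have huv : ‖v‖ * δ ≤ ⟪v, u⟫ := by
      have : ⟪u, w⟫ = ‖v‖⁻¹ * ⟪v, u⟫ := by
        rw [hw, real_inner_smul_right, real_inner_comm]
      rw [this] at huw
      calc ‖v‖ * δ ≤ ‖v‖ * (‖v‖⁻¹ * ⟪v, u⟫) := by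
            exact mul_le_mul_of_nonneg_left huw hvpos.le
        _ = ⟪v, u⟫ := by field_simp
    have hyv : ⟪v, y⟫ < ‖v‖ * δ := by
      calc ⟪v, y⟫ ≤ ‖v‖ * ‖y‖ := real_inner_le_norm v y
        _ < ‖v‖ * δ := by
            have : ‖y‖ < δ := by simpa using hy
            exact mul_lt_mul_of_pos_left this hvpos
    have : f u < f y := lt_trans (hfP u (subset_convexHull ℝ _ hu)) hfy
    rw [hfv, hfv] at this
    linarith
  have hsub : P ⊆ convexHull ℝ T := convexHull_mono htT
  exact mem_interior.2 ⟨Metric.ball 0 δ, hball.trans hsub, Metric.isOpen_ball,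
    Metric.mem_ball_self hδpos⟩

/-- if every open hemisphere of `S^{d-1}` contains a point of the
relative interior of `S ⊆ S^{d-1}`, then the origin lies in the interior of the
convex hull of the relative interior of `S`. -/
theorem origin_mem_interior_convexHull_of_hemispheres
    (d : ℕ) (hd : 2 ≤ d) (S : Set (EuclideanSpace ℝ (Fin d)))
    (hS : S ⊆ Metric.sphere 0 1)
    (hhemi : ∀ w : EuclideanSpace ℝ (Fin d), ‖w‖ = 1 →
      ∃ u ∈ sphereInterior S, 0 < ⟪u, w⟫) :
    (0 : EuclideanSpace ℝ (Fin d)) ∈ interior (convexHull ℝ (sphereInterior S)) := by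
  exact aux_origin_mem hd (sphereInterior S) hhemi
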